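/- For any topological space X on which ν_LS satisfies axiom (iii) (for every A there is an open U ⊇ A with ν_LS(A) = ν_LS(U)): (a) ν_LS(A) = ν_LS(cl(A)) for every subset A; (b) ν_H(A) ≤ ν_LS(A) for every subset A. -/

import Mathlib

open Set

noncomputable def coverNum {X : Type*} [TopologicalSpace X] (T : Set (Set X)) (A : Set X) : ℕ∞ :=
  sInf {n : ℕ∞ | ∃ F : Finset (Set X), (F.card : ℕ∞) = n ∧ ↑F ⊆ T ∧ A ⊆ ⋃₀ ↑F}

def ContractibleIn {X : Type*} [TopologicalSpace X] (A : Set X) : Prop :=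
  ∃ c : X, (⟨Subtype.val, continuous_subtype_val⟩ : C(A, X)).Homotopic (ContinuousMap.const A c)

noncomputable def nuH (M : Type*) [TopologicalSpace M] : Set M → ℕ∞ :=
  coverNum {U : Set M | IsOpen U ∧ ContractibleIn U}

noncomputable def nuLS (M : Type*) [TopologicalSpace M] : Set M → ℕ∞ :=
  coverNum {C : Set M | IsClosed C ∧ ContractibleIn C}

lemma coverNum_mono {X : Type*} [TopologicalSpace X] (T : Set (Set X)) {A B : Set X}
    (h : A ⊆ B) : coverNum T A ≤ coverNum T B := by
  apply sInf_le_sInf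
  rintro n ⟨F, hcard, hFT, hBF⟩
  exact ⟨F, hcard, hFT, h.trans hBF⟩

lemma contractibleIn_mono {X : Type*} [TopologicalSpace X] {B D : Set X} (h : B ⊆ D)
    (hD : ContractibleIn D) : ContractibleIn B := by
  obtain ⟨c, hc⟩ := hD
  refine ⟨c, ?_⟩
  have h2 := ContinuousMap.Homotopic.comp hc (ContinuousMap.Homotopic.refl
    (⟨Set.inclusion h, continuous_inclusion h⟩ : C(B, D)))
  have e1 : ((⟨Subtype.val, continuous_subtype_val⟩ : C(D, X)).comp
      (⟨Set.inclusion h, continuous_inclusion h⟩ : C(B, D)))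
      = (⟨Subtype.val, continuous_subtype_val⟩ : C(B, X)) := by
    ext x; rfl
  have e2 : ((ContinuousMap.const D c).comp
      (⟨Set.inclusion h, continuous_inclusion h⟩ : C(B, D)))
      = ContinuousMap.const B c := by
    ext x; rfl
  rwa [e1, e2] at h2

lemma key_expand {X : Type*} [TopologicalSpace X]
    (hiii : ∀ A : Set X, ∃ U : Set X, IsOpen U ∧ A ⊆ U ∧ nuLS X A = nuLS X U)
    {C : Set X} (hC : IsClosed C ∧ ContractibleIn C) :
    ∃ V : Set X, (IsOpen V ∧ ContractibleIn V) ∧ C ⊆ V := by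
  obtain ⟨U, hUopen, hCU, hEq⟩ := hiii C
  have h1 : nuLS X U ≤ 1 := by
    rw [← hEq]
    apply sInf_le
    refine ⟨{C}, by simp, by simpa using hC, by simp⟩
  have h2 : nuLS X U < 2 := lt_of_le_of_lt h1 (by norm_num)
  rw [nuLS, coverNum, sInf_lt_iff] at h2
  obtain ⟨n, ⟨F, hcard, hFT, hUF⟩, hn⟩ := h2
  have hcle : F.card ≤ 1 := by
    have hlt : (F.card : ℕ∞) < 2 := hcard ▸ hn
    have : F.card < 2 := by exact_mod_cast hlt
    omega
  obtain ⟨c, _⟩ := hC.2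
  rcases F.eq_empty_or_nonempty with rfl | hFne
  · -- U is empty
    have hUe : U = ∅ := by
      have := hUF
      simpa using this
    refine ⟨∅, ⟨isOpen_empty, ⟨c, ?_⟩⟩, hUe ▸ hCU⟩
    have : (⟨Subtype.val, continuous_subtype_val⟩ : C((∅ : Set X), X))
        = ContinuousMap.const (∅ : Set X) c :=
      ContinuousMap.ext fun a => absurd a.2 (Set.notMem_empty _)
    rw [this]
  · obtain ⟨D, hDF⟩ := Finset.card_eq_one.mp (le_antisymm hcle hFne.card_pos)
    subst hDF
    have hDT : IsClosed D ∧ ContractibleIn D := hFT (by simp)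
    have hUD : U ⊆ D := by simpa using hUF
    exact ⟨U, ⟨hUopen, contractibleIn_mono hUD hDT.2⟩, hCU⟩

/-- if `ν_LS` satisfies axiom (iii) on `X`, then (a) `ν_LS(A) = ν_LS(cl A)`
and (b) `ν_H(A) ≤ ν_LS(A)` for every subset `A`. -/
theorem nuLS_closure_and_nuH_le {X : Type*} [TopologicalSpace X]
    (hiii : ∀ A : Set X, ∃ U : Set X, IsOpen U ∧ A ⊆ U ∧ nuLS X A = nuLS X U) :
    (∀ A : Set X, nuLS X A = nuLS X (closure A)) ∧
    (∀ A : Set X, nuH X A ≤ nuLS X A) := by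
  classical
  constructor
  · intro A
    apply le_antisymm
    · exact coverNum_mono _ subset_closure
    · apply le_sInf
      rintro n ⟨F, hcard, hFT, hAF⟩
      apply sInf_le
      refine ⟨F, hcard, hFT, closure_minimal hAF ?_⟩
      rw [Set.sUnion_eq_biUnion]
      exact F.finite_toSet.isClosed_biUnion (fun t ht => (hFT ht).1)
  · intro A
    apply le_sInf
    rintro n ⟨F, hcard, hFT, hAF⟩
    have hkey : ∀ C ∈ F, ∃ V : Set X, (IsOpen V ∧ ContractibleIn V) ∧ C ⊆ V :=
      fun C hC => key_expand hiii (hFT hC)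
    choose! V hV hCV using hkey
    refine le_trans (sInf_le ⟨F.image V, rfl, ?_, ?_⟩) ?_
    · intro W hW
      simp only [Finset.coe_image, Set.mem_image, Finset.mem_coe] at hW
      obtain ⟨C, hC, rfl⟩ := hW
      exact hV C hC
    · intro x hx
      obtain ⟨C, hC, hxC⟩ := hAF hx
      exact ⟨V C, by simpa using ⟨C, hC, rfl⟩, hCV C hC hxC⟩
    · rw [← hcard]
      exact_mod_cast Finset.card_image_le
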